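/- Let G be an s-t graph with deg(s) = 1, N(s) = {a}, and a ≠ t. Let G' be obtained from G by deleting s and designating a as the new source. Then G has a tracking set of size at most k if and only if G' (with source a and destination t) has a tracking set of size at most k. -/

import Mathlib

open SimpleGraph

section Aux
variable {V : Type*} [DecidableEq V] {G : SimpleGraph V} {S : Set V}

/-- Lift a walk whose support lies in `S` to a walk in the induced subgraph. -/
def liftWalk : ∀ {u v : V} (p : G.Walk u v) (hu : u ∈ S) (hv : v ∈ S)
    (h : ∀ x ∈ p.support, x ∈ S), (G.induce S).Walk ⟨u, hu⟩ ⟨v, hv⟩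
  | _, _, SimpleGraph.Walk.nil, _, _, _ => SimpleGraph.Walk.nil
  | u, v, @SimpleGraph.Walk.cons _ _ _ w _ hadj q, hu, hv, h =>
      SimpleGraph.Walk.cons (by exact hadj)
        (liftWalk q (h w (by simp)) hv (fun x hx => h x (by simp [hx])))

lemma liftWalk_map : ∀ {u v : V} (p : G.Walk u v) (hu : u ∈ S) (hv : v ∈ S)
    (h : ∀ x ∈ p.support, x ∈ S),
    (liftWalk p hu hv h).map (SimpleGraph.Embedding.induce S).toHom = p
  | _, _, SimpleGraph.Walk.nil, _, _, _ => by simp [liftWalk]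
  | u, v, @SimpleGraph.Walk.cons _ _ _ w _ hadj q, hu, hv, h => by
      exact congrArg (SimpleGraph.Walk.cons hadj) (liftWalk_map q _ hv _)

lemma filter_map_val (T : Finset V) (T' : Finset ↥S)
    (hTT' : ∀ x : ↥S, x ∈ T' ↔ (x : V) ∈ T) (l : List ↥S) :
    (l.map (Subtype.val)).filter (· ∈ T) = (l.filter (· ∈ T')).map Subtype.val := by
  induction l with
  | nil => simp
  | cons x l ih =>
    by_cases hx : (x : V) ∈ T
    · rw [List.map_cons, List.filter_cons_of_pos (by simpa using hx),
        List.filter_cons_of_pos (by simpa using (hTT' x).2 hx), List.map_cons, ih]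
    · rw [List.map_cons, List.filter_cons_of_neg (by simpa using hx),
        List.filter_cons_of_neg (by simpa using fun h => hx ((hTT' x).1 h)), ih]

lemma decomp {s t a : V} (hst : s ≠ t) (hN' : ∀ w, G.Adj s w → w = a)
    (p : G.Walk s t) (hp : p.IsPath) :
    ∃ (hsa : G.Adj s a) (q : G.Walk a t), p = SimpleGraph.Walk.cons hsa q ∧
      s ∉ q.support ∧ q.IsPath := by
  cases p with
  | nil => exact absurd rfl hst
  | cons h q =>
    rename_i w
    have hw : w = a := hN' w h
    subst hw
    rw [SimpleGraph.Walk.cons_isPath_iff] at hp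
    exact ⟨h, q, rfl, hp.2, hp.1⟩

end Aux

/-- A tracking set for an s-t graph: any two distinct s-t paths yield different
sequences of vertices of `T`. -/
def IsTrackingSet {V : Type*} [DecidableEq V] (G : SimpleGraph V) (s t : V)
    (T : Finset V) : Prop :=
  ∀ p q : G.Path s t,
    p.1.support.filter (· ∈ T) = q.1.support.filter (· ∈ T) → p = q

/-- if `deg(s) = 1` with unique neighbor `a ≠ t`, deleting `s`
and taking `a` as the new source preserves having a tracking set of size at
most `k`. -/
theorem delete_degree_one_source {V : Type*} [Fintype V] [DecidableEq V]
    (G : SimpleGraph V) [DecidableRel G.Adj] (s t a : V) (k : ℕ)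
    (hst : s ≠ t) (hat : a ≠ t) (has : a ≠ s) (hts : t ≠ s)
    (hdeg : G.degree s = 1) (hN : G.neighborFinset s = {a}) :
    (∃ T : Finset V, IsTrackingSet G s t T ∧ T.card ≤ k) ↔
    (∃ T : Finset {v : V | v ≠ s},
      IsTrackingSet (G.induce {v : V | v ≠ s}) ⟨a, has⟩ ⟨t, hts⟩ T ∧
      T.card ≤ k) := by
  have hS : ∀ v : V, v ∈ ({v : V | v ≠ s} : Set V) ↔ v ≠ s := fun v => Iff.rfl
  set S : Set V := {v : V | v ≠ s} with hSdef
  have haS : a ∈ S := has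
  have htS : t ∈ S := hts
  have hsa : G.Adj s a := by
    have : a ∈ G.neighborFinset s := by rw [hN]; exact Finset.mem_singleton_self a
    exact (G.mem_neighborFinset s a).1 this
  have hN' : ∀ w, G.Adj s w → w = a := by
    intro w hw
    have : w ∈ G.neighborFinset s := (G.mem_neighborFinset s w).2 hw
    rw [hN] at this
    exact Finset.mem_singleton.1 this
  haveI : DecidablePred (· ∈ S) := fun v => decidable_of_iff (v ≠ s) (hS v).symm
  -- the lifted path construction: from a path in the induced graph to one in G
  have hP : ∀ q : (G.induce S).Path ⟨a, haS⟩ ⟨t, htS⟩,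
      (SimpleGraph.Walk.cons hsa
        (q.1.map (SimpleGraph.Embedding.induce S).toHom)).IsPath := by
    intro q
    refine (SimpleGraph.Walk.cons_isPath_iff _ _).2 ?_
    refine ⟨SimpleGraph.Walk.map_isPath_of_injective
      ((SimpleGraph.Embedding.induce S : G.induce S ↪g G)).injective q.2, ?_⟩
    change s ∉ (q.1.map (SimpleGraph.Embedding.induce S).toHom).support
    rw [SimpleGraph.Walk.support_map]
    rintro hmem
    obtain ⟨x, -, hx⟩ := List.mem_map.1 hmem
    exact x.2 hx
  constructor
  · rintro ⟨T, hT, hcard⟩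
    refine ⟨T.subtype (· ∈ S), ?_, ?_⟩
    · intro q1 q2 hfil
      set P1 : G.Path s t := ⟨_, hP q1⟩ with hP1
      set P2 : G.Path s t := ⟨_, hP q2⟩ with hP2
      have hmemTT : ∀ x : ↥S, x ∈ T.subtype (· ∈ S) ↔ (x : V) ∈ T := by
        intro x; simp [Finset.mem_subtype]
      have hfil' : P1.1.support.filter (· ∈ T) = P2.1.support.filter (· ∈ T) := by
        change (s :: (q1.1.map (SimpleGraph.Embedding.induce S).toHom).support).filter (· ∈ T)
          = (s :: (q2.1.map (SimpleGraph.Embedding.induce S).toHom).support).filter (· ∈ T)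
        simp only [SimpleGraph.Walk.support_map, List.filter_cons]
        have hcoe : ⇑(SimpleGraph.Embedding.induce S : G.induce S ↪g G).toHom
            = (Subtype.val : ↥S → V) := rfl
        rw [hcoe, filter_map_val T _ hmemTT, filter_map_val T _ hmemTT, hfil]
      have heq := hT P1 P2 hfil'
      have heq' : P1.1 = P2.1 := congrArg Subtype.val heq
      rw [hP1, hP2] at heq'
      simp only [SimpleGraph.Walk.cons.injEq, heq_eq_eq, true_and] at heq'
      have := SimpleGraph.Walk.map_injective_of_injective
        ((SimpleGraph.Embedding.induce S : G.induce S ↪g G)).injective _ _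
          (eq_of_heq (SimpleGraph.Walk.cons.inj heq').2)
      exact Subtype.ext this
    · calc (T.subtype (· ∈ S)).card ≤ T.card := by
            rw [Finset.card_subtype]; exact Finset.card_filter_le _ _
        _ ≤ k := hcard
  · rintro ⟨T', hT', hcard⟩
    refine ⟨T'.map ⟨Subtype.val, Subtype.val_injective⟩, ?_, by simpa using hcard⟩
    set T : Finset V := T'.map ⟨Subtype.val, Subtype.val_injective⟩ with hTdef
    have hmemTT : ∀ x : ↥S, x ∈ T' ↔ (x : V) ∈ T := by
      intro x; rw [hTdef]; exact (Finset.mem_map' _).symm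
    intro p1 p2 hfil
    obtain ⟨hsa1, q1, hq1, hs1, hq1p⟩ := decomp hst hN' p1.1 p1.2
    obtain ⟨hsa2, q2, hq2, hs2, hq2p⟩ := decomp hst hN' p2.1 p2.2
    have hsup1 : ∀ x ∈ q1.support, x ∈ S := fun x hx hxe => hs1 (hxe ▸ hx)
    have hsup2 : ∀ x ∈ q2.support, x ∈ S := fun x hx hxe => hs2 (hxe ▸ hx)
    set Q1 : (G.induce S).Path ⟨a, haS⟩ ⟨t, htS⟩ :=
      ⟨liftWalk q1 haS htS hsup1, SimpleGraph.Walk.IsPath.of_map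
        (f := (SimpleGraph.Embedding.induce S).toHom)
        (by rw [liftWalk_map]; exact hq1p)⟩ with hQ1
    set Q2 : (G.induce S).Path ⟨a, haS⟩ ⟨t, htS⟩ :=
      ⟨liftWalk q2 haS htS hsup2, SimpleGraph.Walk.IsPath.of_map
        (f := (SimpleGraph.Embedding.induce S).toHom)
        (by rw [liftWalk_map]; exact hq2p)⟩ with hQ2
    have hsupQ1 : q1.support = Q1.1.support.map Subtype.val := by
      conv_lhs => rw [← liftWalk_map q1 haS htS hsup1]
      exact SimpleGraph.Walk.support_map _ _
    have hsupQ2 : q2.support = Q2.1.support.map Subtype.val := by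
      conv_lhs => rw [← liftWalk_map q2 haS htS hsup2]
      exact SimpleGraph.Walk.support_map _ _
    have htail : q1.support.filter (· ∈ T) = q2.support.filter (· ∈ T) := by
      rw [hq1, hq2] at hfil
      rw [SimpleGraph.Walk.support_cons, SimpleGraph.Walk.support_cons] at hfil
      by_cases hsT : s ∈ T
      · rw [List.filter_cons_of_pos (by simpa using hsT),
          List.filter_cons_of_pos (by simpa using hsT)] at hfil
        simpa only [List.cons.injEq, true_and] using hfil
      · rwa [List.filter_cons_of_neg (by simpa using hsT),
          List.filter_cons_of_neg (by simpa using hsT)] at hfil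
    rw [hsupQ1, hsupQ2, filter_map_val T T' hmemTT, filter_map_val T T' hmemTT] at htail
    have hQeq : Q1 = Q2 :=
      hT' Q1 Q2 ((List.map_injective_iff.2 Subtype.val_injective) htail)
    have hqeq : q1 = q2 := by
      have := congrArg (fun w : (G.induce S).Path ⟨a, haS⟩ ⟨t, htS⟩ =>
        w.1.map (SimpleGraph.Embedding.induce S).toHom) hQeq
      simpa [hQ1, hQ2, liftWalk_map] using this
    apply Subtype.ext
    rw [hq1, hq2, hqeq]
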